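/- arXiv:2107.12315 — 2 statements merged into one kernel-verified Lean document; each statement's English description precedes it below -/
import Mathlib

section
/- Let B be a maximal bipartite subgraph of a connected graph G with bipartition V(B) = V_+ ∪ V_-. Define α ∈ ℝ^N by α_i = +1/2 if i ∈ V_+, α_i = −1/2 if i ∈ V_-, and α_i = 0 otherwise. Then ⟨e_i − e_j, α⟩ ≥ −1 for every vertex ±(e_i−e_j) of ∇_G, with equality exactly on the set F = {e_i − e_j : i ∈ V_-, j ∈ V_+, {i,j} ∈ E(B)}; hence F is a face of ∇_G with G_F = B. -/
noncomputable def stdBasis {N : ℕ} (i : Fin N) : Fin N → ℝ := Pi.single i 1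

def nabla {N : ℕ} (G : SimpleGraph (Fin N)) : Set (Fin N → ℝ) :=
  {x | ∃ i j, G.Adj i j ∧ x = stdBasis i - stdBasis j}

noncomputable def inn {N : ℕ} (x α : Fin N → ℝ) : ℝ := ∑ i, x i * α i

def IsFace {N : ℕ} (G : SimpleGraph (Fin N)) (F : Set (Fin N → ℝ)) : Prop :=
  ∃ α : Fin N → ℝ, (∀ x ∈ nabla G, -1 ≤ inn x α) ∧
    F = {x | x ∈ nabla G ∧ inn x α = -1}

def IsFacet {N : ℕ} (G : SimpleGraph (Fin N)) (F : Set (Fin N → ℝ)) : Prop :=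
  IsFace G F ∧ Module.finrank ℝ (vectorSpan ℝ F) = N - 2

def faceGraph {N : ℕ} (F : Set (Fin N → ℝ)) : SimpleGraph (Fin N) :=
  SimpleGraph.fromRel (fun i j => stdBasis i - stdBasis j ∈ F)

def MaxBipartiteSubgraph {N : ℕ} (G H : SimpleGraph (Fin N)) : Prop :=
  H ≤ G ∧ H.Colorable 2 ∧ ∀ H', H' ≤ G → H'.Colorable 2 → H ≤ H' → H' = H

def inducedOn {N : ℕ} (G : SimpleGraph (Fin N)) (s : Set (Fin N)) : SimpleGraph (Fin N) where
  Adj i j := G.Adj i j ∧ i ∈ s ∧ j ∈ s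
  symm := by constructor; intro i j h; exact ⟨h.1.symm, h.2.2, h.2.1⟩
  loopless := by constructor; intro i h; exact G.irrefl h.1



lemma inn_std {N : ℕ} (i j : Fin N) (α : Fin N → ℝ) :
    inn (stdBasis i - stdBasis j) α = α i - α j := by
  simp only [inn, stdBasis, Pi.sub_apply, sub_mul, Finset.sum_sub_distrib,
    Pi.single_apply, ite_mul, one_mul, zero_mul]
  rw [Finset.sum_ite_eq' Finset.univ i α, Finset.sum_ite_eq' Finset.univ j α]
  simp

lemma std_inj {N : ℕ} {i j a b : Fin N} (hij : i ≠ j)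
    (h : stdBasis i - stdBasis j = stdBasis a - stdBasis b) : i = a ∧ j = b := by
  have hi := congrFun h i
  have hj := congrFun h j
  simp only [stdBasis, Pi.sub_apply, Pi.single_apply] at hi hj
  simp only [if_pos rfl, if_neg (Ne.symm hij), if_neg hij] at hi hj
  constructor
  · by_contra hia
    rw [if_neg hia] at hi
    split_ifs at hi <;> norm_num at hi
  · by_contra hjb
    rw [if_neg hjb] at hj
    split_ifs at hj <;> norm_num at hj

theorem stmt8 {N : ℕ} (G : SimpleGraph (Fin N)) (hG : G.Connected)
    (B : SimpleGraph (Fin N)) (hB : MaxBipartiteSubgraph G B)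
    (Vp Vm : Set (Fin N)) (hdisj : Disjoint Vp Vm)
    (hsupp : B.support = Vp ∪ Vm)
    (hbip : ∀ i j, B.Adj i j → (i ∈ Vp ∧ j ∈ Vm) ∨ (i ∈ Vm ∧ j ∈ Vp)) :
    ∀ α : Fin N → ℝ,
      (∀ i, (i ∈ Vp → α i = 1/2) ∧ (i ∈ Vm → α i = -(1/2)) ∧
        (i ∉ Vp ∪ Vm → α i = 0)) →
    ∀ F : Set (Fin N → ℝ),
      (F = {x | ∃ i j, i ∈ Vm ∧ j ∈ Vp ∧ B.Adj i j ∧ x = stdBasis i - stdBasis j}) →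
    (∀ x ∈ nabla G, -1 ≤ inn x α) ∧
    {x | x ∈ nabla G ∧ inn x α = -1} = F ∧
    IsFace G F ∧ faceGraph F = B := by
  intro α hα F hF
  classical
  have hge : ∀ i, -(1/2 : ℝ) ≤ α i := by
    intro i
    by_cases h1 : i ∈ Vp
    · rw [(hα i).1 h1]; norm_num
    · by_cases h2 : i ∈ Vm
      · rw [(hα i).2.1 h2]
      · rw [(hα i).2.2 (by simp [h1, h2])]; norm_num
  have hle : ∀ i, α i ≤ (1/2 : ℝ) := by
    intro i
    by_cases h1 : i ∈ Vp
    · rw [(hα i).1 h1]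
    · by_cases h2 : i ∈ Vm
      · rw [(hα i).2.1 h2]; norm_num
      · rw [(hα i).2.2 (by simp [h1, h2])]; norm_num
  have hmem_m : ∀ i, α i = -(1/2 : ℝ) → i ∈ Vm := by
    intro i h
    by_cases h2 : i ∈ Vm
    · exact h2
    · by_cases h1 : i ∈ Vp
      · rw [(hα i).1 h1] at h; norm_num at h
      · rw [(hα i).2.2 (by simp [h1, h2])] at h; norm_num at h
  have hmem_p : ∀ i, α i = (1/2 : ℝ) → i ∈ Vp := by
    intro i h
    by_cases h1 : i ∈ Vp
    · exact h1
    · by_cases h2 : i ∈ Vm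
      · rw [(hα i).2.1 h2] at h; norm_num at h
      · rw [(hα i).2.2 (by simp [h1, h2])] at h; norm_num at h
  have part1 : ∀ x ∈ nabla G, -1 ≤ inn x α := by
    rintro x ⟨i, j, hadj, rfl⟩
    rw [inn_std]
    have := hge i; have := hle j
    linarith
  have part2 : {x | x ∈ nabla G ∧ inn x α = -1} = F := by
    ext x
    constructor
    · rintro ⟨⟨i, j, hadj, rfl⟩, heq⟩
      rw [inn_std] at heq
      have hi : α i = -(1/2) := by have := hge i; have := hle j; linarith
      have hj : α j = (1/2) := by have := hge i; have := hle j; linarith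
      have him : i ∈ Vm := hmem_m i hi
      have hjp : j ∈ Vp := hmem_p j hj
      -- show B.Adj i j by maximality
      have hBadj : B.Adj i j := by
        set H' : SimpleGraph (Fin N) := B ⊔ SimpleGraph.fromEdgeSet {s(i, j)} with hH'
        have hle' : H' ≤ G := by
          apply sup_le hB.1
          intro u v huv
          rw [SimpleGraph.fromEdgeSet_adj] at huv
          obtain ⟨huv1, huv2⟩ := huv
          rw [Set.mem_singleton_iff, Sym2.eq_iff] at huv1
          rcases huv1 with ⟨rfl, rfl⟩ | ⟨rfl, rfl⟩
          · exact hadj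
          · exact hadj.symm
        have hcol : H'.Colorable 2 := by
          refine ⟨SimpleGraph.Coloring.mk (fun v => if v ∈ Vp then 0 else 1) ?_⟩
          intro u v huv
          rcases huv with hB' | he
          · rcases hbip u v hB' with ⟨hu, hv⟩ | ⟨hu, hv⟩
            · simp [hu, Set.disjoint_right.mp hdisj hv]
            · simp [hv, Set.disjoint_right.mp hdisj hu]
          · rw [SimpleGraph.fromEdgeSet_adj, Set.mem_singleton_iff, Sym2.eq_iff] at he
            rcases he.1 with ⟨rfl, rfl⟩ | ⟨rfl, rfl⟩
            · simp [hjp, Set.disjoint_right.mp hdisj him]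
            · simp [hjp, Set.disjoint_right.mp hdisj him]
        have hEq : H' = B := hB.2.2 H' hle' hcol le_sup_left
        have : H'.Adj i j := by
          apply Or.inr
          rw [SimpleGraph.fromEdgeSet_adj]
          exact ⟨rfl, hadj.ne⟩
        rwa [hEq] at this
      rw [hF]
      exact ⟨i, j, him, hjp, hBadj, rfl⟩
    · intro hx
      rw [hF] at hx
      obtain ⟨i, j, him, hjp, hBadj, rfl⟩ := hx
      refine ⟨⟨i, j, hB.1 hBadj, rfl⟩, ?_⟩
      rw [inn_std, (hα i).2.1 him, (hα j).1 hjp]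
      norm_num
  refine ⟨part1, part2, ⟨α, part1, part2.symm⟩, ?_⟩
  ext i j
  simp only [faceGraph, SimpleGraph.fromRel_adj]
  constructor
  · rintro ⟨hij, hmem | hmem⟩
    · rw [hF] at hmem
      obtain ⟨a, b, ham, hbp, hadj, heq⟩ := hmem
      obtain ⟨rfl, rfl⟩ := std_inj hij heq
      exact hadj
    · rw [hF] at hmem
      obtain ⟨a, b, ham, hbp, hadj, heq⟩ := hmem
      obtain ⟨rfl, rfl⟩ := std_inj (Ne.symm hij) heq
      exact hadj.symm
  · intro hadj
    refine ⟨hadj.ne, ?_⟩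
    rcases hbip i j hadj with ⟨hi, hj⟩ | ⟨hi, hj⟩
    · right; rw [hF]; exact ⟨j, i, hj, hi, hadj.symm, rfl⟩
    · left; rw [hF]; exact ⟨i, j, hi, hj, hadj, rfl⟩
end

section
/- For a proper face F of ∇_G, dim(conv F) = |V(G_F)| − k − 1, where k is the number of connected components of G_F. -/
open Module Finset

section Aux

open Classical

variable {N : ℕ}

/-- The set of edge vectors of a graph. -/
def edgeVecs (H : SimpleGraph (Fin N)) : Set (Fin N → ℝ) :=
  {v | ∃ i j, H.Adj i j ∧ v = stdBasis i - stdBasis j}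

noncomputable instance (H : SimpleGraph (Fin N)) :
    Fintype (SimpleGraph.induce H.support H).ConnectedComponent :=
  Fintype.ofFinite _

/-- Sum over each connected component of the induced graph on the support. -/
noncomputable def compSum (H : SimpleGraph (Fin N)) :
    (Fin N → ℝ) →ₗ[ℝ] ((SimpleGraph.induce H.support H).ConnectedComponent → ℝ) where
  toFun x := fun c => ∑ i : H.support,
    if (SimpleGraph.induce H.support H).connectedComponentMk i = c then x i else 0
  map_add' := by
    intro x y
    funext c
    simp only [Pi.add_apply]
    rw [← Finset.sum_add_distrib]
    apply Finset.sum_congr rfl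
    intro i _
    split_ifs <;> simp
  map_smul' := by
    intro r x
    funext c
    simp only [Pi.smul_apply, RingHom.id_apply, smul_eq_mul]
    rw [Finset.mul_sum]
    apply Finset.sum_congr rfl
    intro i _
    split_ifs <;> simp

/-- Restriction to coordinates off the support. -/
noncomputable def offMap (H : SimpleGraph (Fin N)) :
    (Fin N → ℝ) →ₗ[ℝ] ((↥(H.supportᶜ)) → ℝ) :=
  LinearMap.funLeft ℝ ℝ (fun i : ↥(H.supportᶜ) => (i : Fin N))

noncomputable def phi (H : SimpleGraph (Fin N)) :
    (Fin N → ℝ) →ₗ[ℝ]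
      ((SimpleGraph.induce H.support H).ConnectedComponent → ℝ) × ((↥(H.supportᶜ)) → ℝ) :=
  (compSum H).prod (offMap H)

lemma compSum_stdBasis (H : SimpleGraph (Fin N)) {i : Fin N} (hi : i ∈ H.support)
    (c : (SimpleGraph.induce H.support H).ConnectedComponent) :
    compSum H (stdBasis i) c
      = if (SimpleGraph.induce H.support H).connectedComponentMk ⟨i, hi⟩ = c then 1 else 0 := by
  have hdef : compSum H (stdBasis i) c = ∑ v : H.support,
      if (SimpleGraph.induce H.support H).connectedComponentMk v = c
        then stdBasis i (v : Fin N) else 0 := rfl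
  rw [hdef, Finset.sum_eq_single (⟨i, hi⟩ : H.support)]
  · simp [stdBasis]
  · intro v _ hv
    have hvi : (v : Fin N) ≠ i := by
      intro h; apply hv; exact Subtype.ext h
    simp [stdBasis, Pi.single_eq_of_ne hvi]
  · intro h; exact absurd (Finset.mem_univ _) h

lemma offMap_stdBasis (H : SimpleGraph (Fin N)) {i : Fin N} (hi : i ∈ H.support) :
    offMap H (stdBasis i) = 0 := by
  funext v
  have hvi : (v : Fin N) ≠ i := by
    intro h
    exact v.2 (h ▸ hi)
  simp [offMap, LinearMap.funLeft, stdBasis, Pi.single_eq_of_ne hvi]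

lemma mem_span_of_reachable (H : SimpleGraph (Fin N)) {a b : ↥H.support}
    (h : (SimpleGraph.induce H.support H).Reachable a b) :
    stdBasis (a : Fin N) - stdBasis (b : Fin N) ∈ Submodule.span ℝ (edgeVecs H) := by
  obtain ⟨w⟩ := h
  induction w with
  | nil => simp
  | cons hadj p ih =>
    rename_i u v x
    have h1 : stdBasis (u : Fin N) - stdBasis (v : Fin N) ∈ Submodule.span ℝ (edgeVecs H) := by
      apply Submodule.subset_span
      exact ⟨u, v, by simpa using hadj, rfl⟩
    have := Submodule.add_mem _ h1 ih
    simpa using this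

lemma span_edgeVecs_eq_ker (H : SimpleGraph (Fin N)) :
    Submodule.span ℝ (edgeVecs H) = LinearMap.ker (phi H) := by
  apply le_antisymm
  · rw [Submodule.span_le]
    rintro v ⟨i, j, hadj, rfl⟩
    have hi : i ∈ H.support := ⟨j, hadj⟩
    have hj : j ∈ H.support := ⟨i, hadj.symm⟩
    have hmk : (SimpleGraph.induce H.support H).connectedComponentMk ⟨i, hi⟩
        = (SimpleGraph.induce H.support H).connectedComponentMk ⟨j, hj⟩ := by
      apply SimpleGraph.ConnectedComponent.sound
      exact SimpleGraph.Adj.reachable (by simpa using hadj)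
    simp only [SetLike.mem_coe, LinearMap.mem_ker, phi, LinearMap.prod_apply, Function.prod,
      Prod.mk_eq_zero]
    constructor
    · funext c
      rw [map_sub]
      simp only [Pi.sub_apply, Pi.zero_apply]
      rw [compSum_stdBasis H hi c, compSum_stdBasis H hj c, hmk]
      ring
    · rw [map_sub, offMap_stdBasis H hi, offMap_stdBasis H hj, sub_zero]
  · intro x hx
    simp only [LinearMap.mem_ker, phi, LinearMap.prod_apply, Function.prod, Prod.mk_eq_zero] at hx
    obtain ⟨h1, h2⟩ := hx
    -- choose representatives
    set IG := SimpleGraph.induce H.support H with hIG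
    let rep : IG.ConnectedComponent → ↥H.support := fun c => (Quot.exists_rep c).choose
    have hrep : ∀ c, IG.connectedComponentMk (rep c) = c := fun c =>
      (Quot.exists_rep c).choose_spec
    have hxdecomp : x = ∑ i : ↥H.support,
        x i • (stdBasis (i : Fin N) - stdBasis ((rep (IG.connectedComponentMk i)) : Fin N)) := by
      have hA : (∑ i : ↥H.support, x i • stdBasis (i : Fin N)) = x := by
        funext j
        by_cases hj : j ∈ H.support
        · rw [Finset.sum_apply]
          rw [Finset.sum_eq_single (⟨j, hj⟩ : ↥H.support)]
          · simp [stdBasis]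
          · intro v _ hv
            have hne : j ≠ (v : Fin N) := fun h => hv (Subtype.ext h.symm)
            have : stdBasis (v : Fin N) j = 0 := Pi.single_eq_of_ne hne _
            simp [this]
          · intro h; exact absurd (Finset.mem_univ _) h
        · have hxj : x j = 0 := congrFun h2 ⟨j, hj⟩
          rw [Finset.sum_apply, hxj]
          apply Finset.sum_eq_zero
          intro v _
          have hne : j ≠ (v : Fin N) := fun h => hj (h ▸ v.2)
          have : stdBasis (v : Fin N) j = 0 := Pi.single_eq_of_ne hne _
          simp [this]
      have hB : (∑ i : ↥H.support,
          x i • stdBasis ((rep (IG.connectedComponentMk i)) : Fin N)) = 0 := by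
        rw [← Finset.sum_fiberwise Finset.univ (fun i => IG.connectedComponentMk i)
          (fun i => x i • stdBasis ((rep (IG.connectedComponentMk i)) : Fin N))]
        apply Finset.sum_eq_zero
        intro c _
        have : ∑ i ∈ Finset.filter (fun i => IG.connectedComponentMk i = c) Finset.univ,
            x i • stdBasis ((rep (IG.connectedComponentMk i)) : Fin N)
            = (∑ i ∈ Finset.filter (fun i => IG.connectedComponentMk i = c) Finset.univ,
                x i) • stdBasis ((rep c) : Fin N) := by
          rw [Finset.sum_smul]
          apply Finset.sum_congr rfl
          intro i hi
          rw [Finset.mem_filter] at hi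
          rw [hi.2]
        rw [this]
        have hc : (∑ i ∈ Finset.filter (fun i => IG.connectedComponentMk i = c) Finset.univ,
            x i) = 0 := by
          have hthis : (∑ i : ↥H.support,
              if IG.connectedComponentMk i = c then x i else 0) = 0 := congrFun h1 c
          rw [Finset.sum_filter]
          exact hthis
        rw [hc, zero_smul]
      calc x = (∑ i : ↥H.support, x i • stdBasis (i : Fin N)) - (∑ i : ↥H.support,
          x i • stdBasis ((rep (IG.connectedComponentMk i)) : Fin N)) := by
            rw [hA, hB, sub_zero]
        _ = _ := by
            rw [← Finset.sum_sub_distrib]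
            apply Finset.sum_congr rfl
            intro i _
            rw [smul_sub]
    rw [hxdecomp]
    apply Submodule.sum_mem
    intro i _
    apply Submodule.smul_mem
    apply mem_span_of_reachable
    apply (SimpleGraph.ConnectedComponent.eq).mp
    rw [hrep]

lemma phi_surjective (H : SimpleGraph (Fin N)) : Function.Surjective (phi H) := by
  rintro ⟨f, g⟩
  let IG := SimpleGraph.induce H.support H
  let rep : IG.ConnectedComponent → ↥H.support := fun c => (Quot.exists_rep c).choose
  have hrep : ∀ c, IG.connectedComponentMk (rep c) = c := fun c =>
    (Quot.exists_rep c).choose_spec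
  set x : Fin N → ℝ := fun j => if hj : j ∈ H.support then
      (if (⟨j, hj⟩ : ↥H.support) = rep (IG.connectedComponentMk ⟨j, hj⟩)
        then f (IG.connectedComponentMk ⟨j, hj⟩) else 0)
    else g ⟨j, hj⟩ with hx
  have hxS : ∀ (v : ↥H.support), x v
      = if v = rep (IG.connectedComponentMk v) then f (IG.connectedComponentMk v) else 0 := by
    intro v
    rw [hx]
    simp only []
    rw [dif_pos v.2]
  have hfst : compSum H x = f := by
    funext c
    have hdef : compSum H x c = ∑ v : H.support,
        if IG.connectedComponentMk v = c then x v else 0 := rfl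
    rw [hdef, Finset.sum_eq_single (rep c)]
    · rw [if_pos (hrep c), hxS, hrep c, if_pos rfl]
    · intro v _ hv
      by_cases hvc : IG.connectedComponentMk v = c
      · rw [if_pos hvc, hxS, if_neg]
        intro hveq
        exact hv (by rw [hveq, hvc])
      · rw [if_neg hvc]
    · intro h; exact absurd (Finset.mem_univ _) h
  have hsnd : offMap H x = g := by
    funext v
    have hv : (v : Fin N) ∉ H.support := v.2
    have hdef : offMap H x v = x (v : Fin N) := rfl
    rw [hdef, hx]
    simp only []
    rw [dif_neg hv]
  refine ⟨x, ?_⟩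
  calc phi H x = (compSum H x, offMap H x) := rfl
    _ = (f, g) := by rw [hfst, hsnd]

lemma finrank_span_edgeVecs (H : SimpleGraph (Fin N)) :
    finrank ℝ (Submodule.span ℝ (edgeVecs H))
      + Nat.card (SimpleGraph.induce H.support H).ConnectedComponent = H.support.ncard := by
  have h1 := LinearMap.finrank_range_add_finrank_ker (phi H)
  have h2 : LinearMap.range (phi H) = ⊤ := LinearMap.range_eq_top.mpr (phi_surjective H)
  rw [h2] at h1
  have h3 : finrank ℝ (⊤ : Submodule ℝ
      (((SimpleGraph.induce H.support H).ConnectedComponent → ℝ) × ((↥(H.supportᶜ)) → ℝ)))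
      = Nat.card (SimpleGraph.induce H.support H).ConnectedComponent
        + Fintype.card ↥(H.supportᶜ) := by
    rw [finrank_top, Module.finrank_prod, Module.finrank_pi, Module.finrank_pi,
      Nat.card_eq_fintype_card]
  have h4 : finrank ℝ (Fin N → ℝ) = N := by
    rw [Module.finrank_pi, Fintype.card_fin]
  have h5 : Fintype.card ↥(H.supportᶜ) = N - Fintype.card ↥H.support := by
    rw [Fintype.card_compl_set, Fintype.card_fin]
  have h6 : Fintype.card ↥H.support ≤ Fintype.card (Fin N) :=
    Fintype.card_le_of_injective _ Subtype.coe_injective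
  rw [Fintype.card_fin] at h6
  have h7 : H.support.ncard = Fintype.card ↥H.support := by
    rw [← Nat.card_coe_set_eq, Nat.card_eq_fintype_card]
  rw [h3, h4, h5] at h1
  rw [span_edgeVecs_eq_ker, h7]
  omega

end Aux

/-- The linear functional `x ↦ inn x α`. -/
noncomputable def innL {N : ℕ} (α : Fin N → ℝ) : (Fin N → ℝ) →ₗ[ℝ] ℝ where
  toFun x := inn x α
  map_add' := by
    intro x y
    simp only [inn, Pi.add_apply]
    rw [← Finset.sum_add_distrib]
    apply Finset.sum_congr rfl
    intro i _
    ring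
  map_smul' := by
    intro r x
    simp only [inn, Pi.smul_apply, RingHom.id_apply, smul_eq_mul]
    rw [Finset.mul_sum]
    apply Finset.sum_congr rfl
    intro i _
    ring

theorem stmt17 {N : ℕ} (G : SimpleGraph (Fin N)) (hG : G.Connected)
    (F : Set (Fin N → ℝ)) (hF : IsFace G F) (hne : F.Nonempty) :
    Module.finrank ℝ (vectorSpan ℝ F) +
      Nat.card (SimpleGraph.induce (faceGraph F).support (faceGraph F)).ConnectedComponent + 1
      = (faceGraph F).support.ncard := by
  classical
  obtain ⟨α, hα, hFeq⟩ := hF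
  obtain ⟨x₀, hx₀⟩ := hne
  -- L is -1 on F
  have hL : ∀ x ∈ F, innL α x = -1 := by
    intro x hx
    rw [hFeq] at hx
    exact hx.2
  have hx₀L : innL α x₀ = -1 := hL x₀ hx₀
  have hx₀ne : x₀ ≠ 0 := by
    intro h
    rw [h, map_zero] at hx₀L
    norm_num at hx₀L
  -- vectorSpan ≤ ker L
  have hvs_ker : vectorSpan ℝ F ≤ LinearMap.ker (innL α) := by
    rw [vectorSpan, Submodule.span_le]
    rintro v ⟨x, hx, y, hy, rfl⟩
    simp only [SetLike.mem_coe, LinearMap.mem_ker, vsub_eq_sub, map_sub, hL x hx, hL y hy,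
      sub_self]
  have hx₀nvs : x₀ ∉ vectorSpan ℝ F := by
    intro h
    have := hvs_ker h
    rw [LinearMap.mem_ker] at this
    rw [this] at hx₀L
    norm_num at hx₀L
  -- span F = vectorSpan ⊔ span {x₀}
  have hspan : Submodule.span ℝ F = vectorSpan ℝ F ⊔ Submodule.span ℝ {x₀} := by
    apply le_antisymm
    · rw [Submodule.span_le]
      intro x hx
      have : x = (x - x₀) + x₀ := by ring
      rw [this]
      apply Submodule.add_mem
      · exact Submodule.mem_sup_left (vsub_mem_vectorSpan ℝ hx hx₀)
      · exact Submodule.mem_sup_right (Submodule.subset_span rfl)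
    · apply sup_le
      · rw [vectorSpan, Submodule.span_le]
        rintro v ⟨x, hx, y, hy, rfl⟩
        exact Submodule.sub_mem _ (Submodule.subset_span hx) (Submodule.subset_span hy)
      · rw [Submodule.span_le, Set.singleton_subset_iff]
        exact Submodule.subset_span hx₀
  have hdisj : vectorSpan ℝ F ⊓ Submodule.span ℝ {x₀} = ⊥ := by
    rw [← disjoint_iff]
    rw [Submodule.disjoint_span_singleton]
    intro h
    exact absurd h hx₀nvs
  have hrank : finrank ℝ (Submodule.span ℝ F) = finrank ℝ (vectorSpan ℝ F) + 1 := by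
    rw [hspan]
    have := Submodule.finrank_sup_add_finrank_inf_eq (vectorSpan ℝ F) (Submodule.span ℝ {x₀})
    rw [hdisj, finrank_bot, finrank_span_singleton hx₀ne] at this
    omega
  -- span F = span edgeVecs (faceGraph F)
  have hspanF : Submodule.span ℝ F = Submodule.span ℝ (edgeVecs (faceGraph F)) := by
    apply le_antisymm
    · rw [Submodule.span_le]
      intro x hx
      have hx' := hx
      rw [hFeq] at hx'
      obtain ⟨⟨i, j, hadj, rfl⟩, -⟩ := hx'
      apply Submodule.subset_span
      refine ⟨i, j, ?_, rfl⟩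
      rw [faceGraph, SimpleGraph.fromRel_adj]
      exact ⟨hadj.ne, Or.inl hx⟩
    · rw [Submodule.span_le]
      rintro v ⟨i, j, hadj, rfl⟩
      rw [faceGraph, SimpleGraph.fromRel_adj] at hadj
      rcases hadj.2 with h | h
      · exact Submodule.subset_span h
      · have : stdBasis i - stdBasis j = -(stdBasis j - stdBasis i) := by ring
        rw [this]
        exact Submodule.neg_mem _ (Submodule.subset_span h)
  have hmain := finrank_span_edgeVecs (faceGraph F)
  rw [← hspanF, hrank] at hmain
  omega
end
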